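/- Let z ∈ ℝ₊^{N_ε × (2^K−1)} be defined by z_{i,C} = p_C L_C for all cells i and classes C, in the symmetric setting on a square torus. If λ < K / (𝔏 · ⟨ℓ^ε_D⟩), then for every i and C: λ p_C ε² < (1/L_C) · |C| z_{i,C} / (∑_{k,U} ℓ^ε(a_k,a_i) |C∩U| z_{k,U}). -/

import Mathlib

def PK (K : ℕ) : Finset (Finset (Fin K)) :=
  (Finset.univ : Finset (Fin K)).powerset.erase ∅

lemma PK_mem {K : ℕ} {U : Finset (Fin K)} : U ∈ PK K ↔ U ≠ ∅ := by
  simp [PK, Finset.mem_erase]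

lemma sum_filter_mem_const {K : ℕ} (f : Finset (Fin K) → ℝ)
    (hf : ∀ C D : Finset (Fin K), C.card = D.card → f C = f D) (j j' : Fin K) :
    ∑ U ∈ (PK K).filter (fun U => j ∈ U), f U
      = ∑ U ∈ (PK K).filter (fun U => j' ∈ U), f U := by
  apply Finset.sum_nbij' (fun U => U.map (Equiv.swap j j').toEmbedding)
    (fun U => U.map (Equiv.swap j j').toEmbedding)
  · intro U hU
    simp only [Finset.mem_filter, PK_mem] at hU ⊢
    refine ⟨by simpa [Finset.map_eq_empty] using hU.1, ?_⟩
    rw [Finset.mem_map_equiv]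
    simpa using hU.2
  · intro U hU
    simp only [Finset.mem_filter, PK_mem] at hU ⊢
    refine ⟨by simpa [Finset.map_eq_empty] using hU.1, ?_⟩
    rw [Finset.mem_map_equiv]
    simpa using hU.2
  · intro U hU
    ext x
    simp [Finset.mem_map_equiv]
  · intro U hU
    ext x
    simp [Finset.mem_map_equiv]
  · intro U hU
    exact (hf _ _ (by simp)).symm

lemma key_identity {K : ℕ} (hK : 1 ≤ K) (f : Finset (Fin K) → ℝ)
    (hf : ∀ C D : Finset (Fin K), C.card = D.card → f C = f D)
    (C : Finset (Fin K)) :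
    (K : ℝ) * ∑ U ∈ PK K, ((C ∩ U).card : ℝ) * f U
      = (C.card : ℝ) * ∑ U ∈ PK K, (U.card : ℝ) * f U := by
  have h1 : ∀ S : Finset (Fin K), ∑ U ∈ PK K, ((S ∩ U).card : ℝ) * f U
      = ∑ j ∈ S, ∑ U ∈ (PK K).filter (fun U => j ∈ U), f U := by
    intro S
    have h : ∀ U : Finset (Fin K), ((S ∩ U).card : ℝ) * f U
        = ∑ j ∈ S, if j ∈ U then f U else 0 := by
      intro U
      simp [Finset.sum_ite, Finset.filter_mem_eq_inter, mul_comm]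
    rw [Finset.sum_congr rfl (fun U _ => h U), Finset.sum_comm]
    exact Finset.sum_congr rfl fun j _ => (Finset.sum_filter _ _).symm
  set j0 : Fin K := ⟨0, hK⟩ with hj0
  have hconst : ∀ S : Finset (Fin K),
      ∑ U ∈ PK K, ((S ∩ U).card : ℝ) * f U
        = (S.card : ℝ) * ∑ U ∈ (PK K).filter (fun U => j0 ∈ U), f U := by
    intro S
    rw [h1 S, Finset.sum_congr rfl (fun j _ => sum_filter_mem_const f hf j j0),
      Finset.sum_const, nsmul_eq_mul]
  have huniv := hconst Finset.univ
  simp only [Finset.univ_inter, Finset.card_univ, Fintype.card_fin] at huniv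
  rw [hconst C, huniv]
  ring

lemma drift_alg (c pC LC lD eps KK LL : ℝ) (hL : LC ≠ 0) (hlD : lD ≠ 0)
    (heps : eps ≠ 0) (hK : KK ≠ 0) (hLL : LL ≠ 0) (hc : c ≠ 0) :
    (1 / LC) * (c * (pC * LC)) / ((lD / eps ^ 2) * (c * LL / KK))
      = pC * eps ^ 2 * (KK / (LL * lD)) := by
  field_simp

/-- Drift condition: with `z_{i,C} = p_C L_C` in the symmetric setting on the torus,
`λ < K/(𝔏⟨ℓ^ε_D⟩)` implies `λ p_C ε² < (1/L_C)·|C| z_{i,C}/∑_{k,U} ℓ^ε(a_k,a_i)|C∩U| z_{k,U}`. -/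
theorem drift_condition_symmetric (K Nε : ℕ) (hK : 1 ≤ K)
    (ε lam lD : ℝ) (hε : 0 < ε) (hlD : 0 < lD) (hlam : 0 ≤ lam)
    (p L : Finset (Fin K) → ℝ)
    (hp : ∀ C, 0 < p C) (hL : ∀ C, 0 < L C)
    (hpsym : ∀ C D : Finset (Fin K), C.card = D.card → p C = p D)
    (hLsym : ∀ C D : Finset (Fin K), C.card = D.card → L C = L D)
    (la : Fin Nε → Fin Nε → ℝ) (hla : ∀ i k, 0 ≤ la k i)
    (htorus : ∀ i, ∑ k, la k i = lD / ε ^ 2)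
    (hlt : lam < (K : ℝ) / ((∑ U ∈ PK K, (U.card : ℝ) * p U * L U) * lD)) :
    ∀ i : Fin Nε, ∀ C ∈ PK K,
      lam * p C * ε ^ 2 <
        (1 / L C) * ((C.card : ℝ) * (p C * L C)) /
          (∑ k, ∑ U ∈ PK K, la k i * ((C ∩ U).card : ℝ) * (p U * L U)) := by
  intro i C hC
  set 𝔏 : ℝ := ∑ U ∈ PK K, (U.card : ℝ) * p U * L U with h𝔏
  have hfsym : ∀ A B : Finset (Fin K), A.card = B.card → p A * L A = p B * L B :=
    fun A B h => by rw [hpsym A B h, hLsym A B h]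
  have hKpos : (0:ℝ) < K := by exact_mod_cast hK
  have h𝔏pos : 0 < 𝔏 := by
    apply Finset.sum_pos
    · intro U hU
      have : 1 ≤ U.card := Finset.card_pos.mpr (Finset.nonempty_iff_ne_empty.mpr (PK_mem.mp hU))
      have : (1:ℝ) ≤ U.card := by exact_mod_cast this
      have := hp U; have := hL U
      positivity
    · exact ⟨{⟨0, hK⟩}, PK_mem.mpr (by simp)⟩
  have hCcard : (1:ℝ) ≤ C.card := by
    exact_mod_cast Finset.card_pos.mpr (Finset.nonempty_iff_ne_empty.mpr (PK_mem.mp hC))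
  have hCpos : (0:ℝ) < C.card := lt_of_lt_of_le one_pos hCcard
  have h𝔏' : 𝔏 = ∑ U ∈ PK K, (U.card : ℝ) * (p U * L U) :=
    Finset.sum_congr rfl fun U _ => mul_assoc _ _ _
  have hkey : ∑ U ∈ PK K, ((C ∩ U).card : ℝ) * (p U * L U) = (C.card : ℝ) * 𝔏 / K := by
    rw [h𝔏', eq_div_iff hKpos.ne']
    linear_combination key_identity hK (fun U => p U * L U) hfsym C
  have hDen : (∑ k, ∑ U ∈ PK K, la k i * ((C ∩ U).card : ℝ) * (p U * L U))
      = (lD / ε ^ 2) * ((C.card : ℝ) * 𝔏 / K) := by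
    have : ∀ k, ∑ U ∈ PK K, la k i * ((C ∩ U).card : ℝ) * (p U * L U)
        = la k i * ((C.card : ℝ) * 𝔏 / K) := by
      intro k
      rw [← hkey, Finset.mul_sum]
      exact Finset.sum_congr rfl fun U _ => by ring
    rw [Finset.sum_congr rfl fun k _ => this k, ← Finset.sum_mul, htorus i]
  rw [hDen]
  have hRHS : (1 / L C) * ((C.card : ℝ) * (p C * L C)) /
      ((lD / ε ^ 2) * ((C.card : ℝ) * 𝔏 / K)) = p C * ε ^ 2 * ((K:ℝ) / (𝔏 * lD)) := by
    exact drift_alg _ _ _ _ _ _ _ (hL C).ne' hlD.ne' hε.ne' hKpos.ne' h𝔏pos.ne'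
      hCpos.ne'
  rw [hRHS]
  have h1 : 0 < p C * ε ^ 2 := by have := hp C; positivity
  have := mul_lt_mul_of_pos_right hlt h1
  calc lam * p C * ε ^ 2 = lam * (p C * ε ^ 2) := by ring
    _ < (K:ℝ) / (𝔏 * lD) * (p C * ε ^ 2) := this
    _ = p C * ε ^ 2 * ((K:ℝ) / (𝔏 * lD)) := by ring
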